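/- Let (X, μ, T) be a measure-preserving system, f ∈ L²(X, μ), N ≥ M ≥ 1 integers, and (c_n)_{n=1}^N complex numbers. Then ‖∑_{n=1}^N c_n (f ∘ T^n)‖²_{L²} ≤ 2(N/M) ∑_{n=1}^N |c_n|² ‖f‖²_{L²} + 4(N/M) ∑_{m=1}^M |∑_{n=1}^{N−m} c_{n+m} \overline{c_n}| · |⟨f ∘ T^m, f⟩_{L²}|. -/

import Mathlib

open Finset MeasureTheory

private lemma reindex_vdc {E : Type*} [AddCommMonoid E] {N M : ℕ} (hM : 1 ≤ M)
    {h m : ℕ} (hhm : h + m < M) (φ : ℕ → E) :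
    (∑ j ∈ Icc 1 (N + M - 1),
      if j + h ∈ Icc M (N + M - 1) ∧ j + h + m ∈ Icc M (N + M - 1) then φ (j + h + 1 - M) else 0)
      = ∑ n ∈ Icc 1 (N - m), φ n := by
  rw [← Finset.sum_filter]
  refine Finset.sum_nbij' (fun j => j + h + 1 - M) (fun n => n + M - 1 - h) ?_ ?_ ?_ ?_ ?_ <;>
    intro a ha <;> simp only [Finset.mem_filter, Finset.mem_Icc] at * <;> omega

private lemma vdC_hilbert {H : Type*} [NormedAddCommGroup H] [InnerProductSpace ℂ H]
    (u : ℕ → H) (γ : ℕ → ℂ)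
    (hγ : ∀ m n : ℕ, (inner ℂ (u (n + m)) (u n) : ℂ) = γ m)
    (c : ℕ → ℂ) (N M : ℕ) (hM : 1 ≤ M) (hMN : M ≤ N) :
    ‖∑ n ∈ Icc 1 N, c n • u n‖ ^ 2 ≤
      2 * ((N : ℝ) / M) * (∑ n ∈ Icc 1 N, ‖c n‖ ^ 2) * (γ 0).re +
      4 * ((N : ℝ) / M) * ∑ m ∈ Icc 1 M,
        ‖∑ n ∈ Icc 1 (N - m), c (n + m) * (starRingEnd ℂ) (c n)‖ * ‖γ m‖ := by
  set S : H := ∑ n ∈ Icc 1 N, c n • u n with hS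
  set A : ℕ → ℂ := fun m => ∑ n ∈ Icc 1 (N - m), c (n + m) * (starRingEnd ℂ) (c n) with hA
  set J : Finset ℕ := Icc 1 (N + M - 1) with hJ
  set V : ℕ → H := fun k => if k ∈ Icc M (N + M - 1) then c (k + 1 - M) • u (k + 1 - M) else 0
    with hV
  set w : ℕ → H := fun j => ∑ h ∈ range M, V (j + h) with hw
  set X : ℝ := ∑ n ∈ Icc 1 N, ‖c n‖ ^ 2 with hX
  set Y : ℝ := ∑ m ∈ Icc 1 M, ‖A m‖ * ‖γ m‖ with hYdef
  -- pointwise value of inner products of V's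
  have hVinner : ∀ (j h m : ℕ), h + m < M →
      (inner ℂ (V (j + (h + m))) (V (j + h)) : ℂ) =
      (if j + h ∈ Icc M (N + M - 1) ∧ j + h + m ∈ Icc M (N + M - 1) then
        (starRingEnd ℂ) (c (j + h + 1 - M + m)) * c (j + h + 1 - M) * γ m else 0) := by
    intro j h m hm
    by_cases h1 : j + h ∈ Icc M (N + M - 1) <;> by_cases h2 : j + h + m ∈ Icc M (N + M - 1)
    · have e1 : j + (h + m) = j + h + m := by omega
      have e2 : j + h + m + 1 - M = j + h + 1 - M + m := by
        simp only [Finset.mem_Icc] at h1; omega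
      simp only [hV, e1, if_pos h1, if_pos h2, if_pos (And.intro h1 h2), e2,
        inner_smul_left, inner_smul_right, hγ m (j + h + 1 - M)]
      ring
    all_goals
      have e1 : j + (h + m) = j + h + m := by omega
      simp only [Finset.mem_Icc] at h1 h2 ⊢
      simp [hV, e1, h1, h2]
  -- the correlation sums
  set t : ℕ × ℕ → ℂ := fun p => ∑ j ∈ J, (inner ℂ (V (j + p.1)) (V (j + p.2)) : ℂ) with ht
  have htval : ∀ h m : ℕ, h + m < M → t (h + m, h) = (starRingEnd ℂ) (A m) * γ m := by
    intro h m hm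
    have : t (h + m, h) = ∑ n ∈ Icc 1 (N - m), (starRingEnd ℂ) (c (n + m)) * c n * γ m := by
      rw [ht]
      simp only
      rw [← reindex_vdc (N := N) hM hm (fun n => (starRingEnd ℂ) (c (n + m)) * c n * γ m)]
      exact Finset.sum_congr rfl fun j _ => hVinner j h m hm
    rw [this, hA]
    simp only [map_sum, map_mul, RingHomCompTriple.comp_apply, Complex.conj_conj,
      Finset.sum_mul]
    rfl
  -- shift-sum identity
  have hVS : ∀ h ∈ range M, ∑ j ∈ J, V (j + h) = S := by
    intro h hh
    rw [Finset.mem_range] at hh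
    have hre := reindex_vdc (N := N) (M := M) hM (h := h) (m := 0) (by omega)
      (fun n => c n • u n)
    rw [Nat.sub_zero] at hre
    rw [hS, ← hre]
    refine Finset.sum_congr rfl fun j _ => ?_
    by_cases h1 : j + h ∈ Icc M (N + M - 1)
    · obtain ⟨ha, hb⟩ := Finset.mem_Icc.1 h1
      simp [hV, Finset.mem_Icc, ha, hb]
    · have hz : V (j + h) = 0 := by simp only [hV]; exact if_neg h1
      rw [hz, if_neg (fun hc => h1 hc.1)]
  have hsum : ∑ j ∈ J, w j = M • S := by
    calc ∑ j ∈ J, w j = ∑ h ∈ range M, ∑ j ∈ J, V (j + h) := Finset.sum_comm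
    _ = ∑ h ∈ range M, S := Finset.sum_congr rfl hVS
    _ = M • S := by simp
  -- Cauchy-Schwarz step
  have hwnn : (0:ℝ) ≤ ∑ j ∈ J, ‖w j‖ ^ 2 := Finset.sum_nonneg fun j _ => sq_nonneg _
  have hCS : (M : ℝ) ^ 2 * ‖S‖ ^ 2 ≤ 2 * N * ∑ j ∈ J, ‖w j‖ ^ 2 := by
    have h1 : ‖∑ j ∈ J, w j‖ ≤ ∑ j ∈ J, ‖w j‖ := norm_sum_le _ _
    have h2 : (∑ j ∈ J, ‖w j‖) ^ 2 ≤ (J.card : ℝ) * ∑ j ∈ J, ‖w j‖ ^ 2 :=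
      sq_sum_le_card_mul_sum_sq
    have hc : (J.card : ℝ) ≤ 2 * N := by
      rw [hJ, Nat.card_Icc]
      have : N + M - 1 + 1 - 1 ≤ 2 * N := by omega
      exact_mod_cast this
    have h3 : ‖∑ j ∈ J, w j‖ = (M:ℝ) * ‖S‖ := by
      rw [hsum, ← Nat.cast_smul_eq_nsmul ℂ, norm_smul]
      simp
    have h4 : ‖∑ j ∈ J, w j‖ ^ 2 ≤ (∑ j ∈ J, ‖w j‖) ^ 2 :=
      pow_le_pow_left₀ (norm_nonneg _) h1 2
    have h5 : (M:ℝ) ^ 2 * ‖S‖ ^ 2 = ‖∑ j ∈ J, w j‖ ^ 2 := by rw [h3]; ring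
    linarith [mul_le_mul_of_nonneg_right hc hwnn]
  -- expansion of the sum of squares
  have hwj : ∀ j : ℕ, ‖w j‖ ^ 2 = ∑ h' ∈ range M, ∑ h ∈ range M,
      ((inner ℂ (V (j + h')) (V (j + h)) : ℂ)).re := by
    intro j
    have h1 : (inner ℂ (w j) (w j) : ℂ) = ∑ h' ∈ range M, ∑ h ∈ range M,
        (inner ℂ (V (j + h')) (V (j + h)) : ℂ) := by
      simp only [hw, sum_inner, inner_sum]
      exact Finset.sum_comm
    have h2 : ‖w j‖ ^ 2 = ((inner ℂ (w j) (w j) : ℂ)).re := by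
      rw [← inner_self_eq_norm_sq (𝕜 := ℂ) (w j)]
      rfl
    rw [h2, h1, Complex.re_sum]
    exact Finset.sum_congr rfl fun h' _ => Complex.re_sum _ _
  have hexp : ∑ j ∈ J, ‖w j‖ ^ 2 = (∑ p ∈ range M ×ˢ range M, t p).re := by
    rw [Complex.re_sum, Finset.sum_product]
    simp only [ht, Complex.re_sum]
    rw [Finset.sum_congr rfl fun j (_ : j ∈ J) => hwj j, Finset.sum_comm]
    exact Finset.sum_congr rfl fun h' _ => Finset.sum_comm
  -- diagonal terms
  have hγ0 : ∀ h, h ∈ range M → (t (h, h)).re = X * (γ 0).re := by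
    intro h hh
    rw [Finset.mem_range] at hh
    have hv := htval h 0 (by omega)
    rw [add_zero] at hv
    have hA0 : A 0 = ((X : ℝ) : ℂ) := by
      rw [hA, hX]
      push_cast
      refine Finset.sum_congr (by rw [Nat.sub_zero]) fun n _ => ?_
      rw [add_zero, RCLike.mul_conj]
      norm_cast
    rw [hv, hA0, Complex.conj_ofReal, Complex.re_ofReal_mul]
  have hdiagset : (range M ×ˢ range M).filter (fun p => p.1 = p.2)
      = (range M).image fun h => (h, h) := by
    ext ⟨a, b⟩
    simp only [Finset.mem_filter, Finset.mem_product, Finset.mem_range, Finset.mem_image,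
      Prod.mk.injEq]
    constructor
    · rintro ⟨⟨ha, hb⟩, hab⟩
      exact ⟨a, ha, rfl, hab.symm ▸ rfl⟩
    · rintro ⟨x, hx, rfl, rfl⟩
      exact ⟨⟨hx, hx⟩, rfl⟩
  have hdiagsum : ∑ p ∈ (range M ×ˢ range M).filter (fun p => p.1 = p.2), (t p).re
      = M * (X * (γ 0).re) := by
    rw [hdiagset, Finset.sum_image (fun x _ y _ hxy => by simpa using hxy)]
    rw [Finset.sum_congr rfl hγ0, Finset.sum_const, Finset.card_range, nsmul_eq_mul]
  -- off-diagonal terms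
  set d : ℕ × ℕ → ℕ := fun p => (p.1 - p.2) + (p.2 - p.1) with hd
  have htswap : ∀ a b : ℕ, t (a, b) = (starRingEnd ℂ) (t (b, a)) := by
    intro a b
    rw [ht]
    simp only [map_sum]
    exact Finset.sum_congr rfl fun j _ => (inner_conj_symm _ _).symm
  have htnorm : ∀ p : ℕ × ℕ, p ∈ range M ×ˢ range M → p.1 ≠ p.2 →
      ‖t p‖ = ‖A (d p)‖ * ‖γ (d p)‖ := by
    rintro ⟨a, b⟩ hp hne
    rw [Finset.mem_product, Finset.mem_range, Finset.mem_range] at hp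
    simp only at hne
    have hdab : d (a, b) = (a - b) + (b - a) := rfl
    rcases lt_or_gt_of_ne hne with hlt | hgt
    · have hdm : d (a, b) = b - a := by rw [hdab]; omega
      have h2 := htval a (b - a) (by omega)
      rw [Nat.add_sub_cancel' hlt.le] at h2
      rw [hdm, htswap a b, h2, map_mul, norm_mul, RingHomCompTriple.comp_apply]
      simp [RCLike.norm_conj]
    · have hdm : d (a, b) = a - b := by rw [hdab]; omega
      have h2 := htval b (a - b) (by omega)
      rw [Nat.add_sub_cancel' hgt.le] at h2
      rw [hdm, h2, norm_mul, RCLike.norm_conj]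
  have hcard : ∀ m : ℕ, (((range M ×ˢ range M).filter (fun p => p.1 ≠ p.2)).filter
      (fun p => d p = m)).card ≤ 2 * M := by
    intro m
    have hsub : (((range M ×ˢ range M).filter (fun p => p.1 ≠ p.2)).filter
        (fun p => d p = m)) ⊆
        ((range M).image fun h => (h + m, h)) ∪ ((range M).image fun h => (h, h + m)) := by
      rintro ⟨a, b⟩ hp
      simp only [Finset.mem_filter, Finset.mem_product, Finset.mem_range, hd] at hp
      simp only [Finset.mem_union, Finset.mem_image, Finset.mem_range, Prod.mk.injEq]
      obtain ⟨⟨⟨ha, hb⟩, hne⟩, hm⟩ := hp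
      rcases Nat.lt_or_ge a b with hlt | hge
      · exact Or.inr ⟨a, ha, rfl, by omega⟩
      · exact Or.inl ⟨b, hb, by omega, rfl⟩
    calc _ ≤ (((range M).image fun h => (h + m, h)) ∪
          ((range M).image fun h => (h, h + m))).card := Finset.card_le_card hsub
      _ ≤ ((range M).image fun h => (h + m, h)).card
          + ((range M).image fun h => (h, h + m)).card := Finset.card_union_le _ _
      _ ≤ M + M := add_le_add (le_trans (Finset.card_image_le) (by simp))
          (le_trans (Finset.card_image_le) (by simp))
      _ = 2 * M := by omega
  have hYnn : ∀ m, (0:ℝ) ≤ ‖A m‖ * ‖γ m‖ := fun m => by positivity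
  have hoff : ∑ p ∈ (range M ×ˢ range M).filter (fun p => p.1 ≠ p.2), (t p).re
      ≤ 2 * M * Y := by
    set Q := (range M ×ˢ range M).filter (fun p => p.1 ≠ p.2) with hQ
    have hQmem : ∀ p ∈ Q, p ∈ range M ×ˢ range M ∧ p.1 ≠ p.2 := by
      intro p hp; rw [hQ, Finset.mem_filter] at hp; exact hp
    calc ∑ p ∈ Q, (t p).re ≤ ∑ p ∈ Q, ‖t p‖ := Finset.sum_le_sum fun p _ => by
          exact Complex.re_le_norm _
      _ = ∑ p ∈ Q, (fun m => ‖A m‖ * ‖γ m‖) (d p) := Finset.sum_congr rfl fun p hp =>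
          htnorm p (hQmem p hp).1 (hQmem p hp).2
      _ = ∑ m ∈ Q.image d, (Q.filter fun p => d p = m).card • (‖A m‖ * ‖γ m‖) :=
          by exact Finset.sum_comp (fun m => ‖A m‖ * ‖γ m‖) d
      _ ≤ ∑ m ∈ Q.image d, (2 * M : ℝ) * (‖A m‖ * ‖γ m‖) := Finset.sum_le_sum fun m _ => by
          rw [nsmul_eq_mul]
          refine mul_le_mul_of_nonneg_right ?_ (hYnn m)
          exact_mod_cast hcard m
      _ ≤ ∑ m ∈ Icc 1 M, (2 * M : ℝ) * (‖A m‖ * ‖γ m‖) := by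
          refine Finset.sum_le_sum_of_subset_of_nonneg ?_ fun m _ _ => by positivity
          intro m hm
          simp only [Finset.mem_image] at hm
          obtain ⟨p, hp, rfl⟩ := hm
          obtain ⟨hp1, hp2⟩ := hQmem p hp
          rw [Finset.mem_product, Finset.mem_range, Finset.mem_range] at hp1
          simp only [Finset.mem_Icc, hd]
          omega
      _ = 2 * M * Y := by rw [hYdef, ← Finset.mul_sum]
  -- combine
  have hsplit : (∑ p ∈ range M ×ˢ range M, t p).re
      = ∑ p ∈ (range M ×ˢ range M).filter (fun p => p.1 = p.2), (t p).re
        + ∑ p ∈ (range M ×ˢ range M).filter (fun p => ¬ p.1 = p.2), (t p).re := by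
    rw [Complex.re_sum]
    exact (Finset.sum_filter_add_sum_filter_not _ _ _).symm
  have hbound : ∑ j ∈ J, ‖w j‖ ^ 2 ≤ M * (X * (γ 0).re) + 2 * M * Y := by
    rw [hexp, hsplit, hdiagsum]
    have : ((range M ×ˢ range M).filter (fun p => ¬ p.1 = p.2))
        = ((range M ×ˢ range M).filter (fun p => p.1 ≠ p.2)) := rfl
    rw [this]
    linarith [hoff]
  have hM0 : (0:ℝ) < M := by exact_mod_cast hM
  have key : (M:ℝ) ^ 2 * ‖S‖ ^ 2 ≤ 2 * N * (M * (X * (γ 0).re) + 2 * M * Y) :=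
    le_trans hCS (mul_le_mul_of_nonneg_left hbound (by positivity))
  have hfin : 2 * ((N:ℝ) / M) * X * (γ 0).re + 4 * ((N:ℝ) / M) * Y
      = (2 * N * (M * (X * (γ 0).re) + 2 * M * Y)) / M ^ 2 := by
    field_simp
    ring
  rw [hfin, le_div_iff₀ (by positivity)]
  nlinarith [key]

private lemma coeFn_sum_ae {X : Type*} [MeasurableSpace X] {μ : Measure X} {ι : Type*}
    (s : Finset ι) (G : ι → Lp ℂ 2 μ) :
    ⇑(∑ i ∈ s, G i) =ᵐ[μ] fun x => ∑ i ∈ s, G i x := by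
  classical
  induction s using Finset.induction_on with
  | empty => simp only [Finset.sum_empty]; exact Lp.coeFn_zero ℂ 2 μ
  | @insert a s ha ih =>
    rw [Finset.sum_insert ha]
    filter_upwards [Lp.coeFn_add (G a) (∑ i ∈ s, G i), ih] with x hx1 hx2
    rw [hx1]
    simp only [Pi.add_apply, hx2, Finset.sum_insert ha]

theorem vdC_mps {X : Type*} [MeasurableSpace X] (μ : Measure X) [IsProbabilityMeasure μ]
    (T : X → X) (hT : MeasurePreserving T μ μ)
    (f : X → ℂ) (hf : MemLp f 2 μ) (N M : ℕ) (hM : 1 ≤ M) (hMN : M ≤ N) (c : ℕ → ℂ) :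
    ∫ x, ‖∑ n ∈ Icc 1 N, c n * f (T^[n] x)‖ ^ 2 ∂μ ≤
      2 * ((N : ℝ) / M) * (∑ n ∈ Icc 1 N, ‖c n‖ ^ 2) * (∫ x, ‖f x‖ ^ 2 ∂μ) +
      4 * ((N : ℝ) / M) * ∑ m ∈ Icc 1 M,
        ‖∑ n ∈ Icc 1 (N - m), c (n + m) * (starRingEnd ℂ) (c n)‖ *
          ‖∫ x, f (T^[m] x) * (starRingEnd ℂ) (f x) ∂μ‖ := by
  have hfn : ∀ n : ℕ, MemLp (fun x => f (T^[n] x)) 2 μ := fun n =>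
    hf.comp_measurePreserving (hT.iterate n)
  set F : ℕ → Lp ℂ 2 μ := fun n => (hfn n).toLp _ with hF
  set γ : ℕ → ℂ := fun m => (inner ℂ (F m) (F 0) : ℂ) with hγdef
  -- bridge between Lp norms and integrals
  have hnorm2 : ∀ (S : Lp ℂ 2 μ) (g : X → ℂ), (⇑S =ᵐ[μ] g) →
      ∫ x, ‖g x‖ ^ 2 ∂μ = ‖S‖ ^ 2 := by
    intro S g hSg
    rw [← inner_self_eq_norm_sq (𝕜 := ℂ) S, L2.inner_def,
      ← integral_re (L2.integrable_inner S S)]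
    refine integral_congr_ae ?_
    filter_upwards [hSg] with x hx
    rw [← hx, inner_self_eq_norm_sq]
  -- inner products as integrals
  have hinner : ∀ a b : ℕ, (inner ℂ (F a) (F b) : ℂ)
      = ∫ x, (starRingEnd ℂ) (f (T^[a] x)) * f (T^[b] x) ∂μ := by
    intro a b
    rw [hF, L2.inner_def]
    refine integral_congr_ae ?_
    filter_upwards [(hfn a).coeFn_toLp, (hfn b).coeFn_toLp] with x hx1 hx2
    rw [hx1, hx2, RCLike.inner_apply, mul_comm]
  -- the key stationarity identity
  have hγkey : ∀ m n : ℕ, (inner ℂ (F (n + m)) (F n) : ℂ) = γ m := by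
    intro m n
    rw [hinner, hγdef]
    simp only
    rw [hinner]
    have hTn := hT.iterate n
    have hg1 : AEStronglyMeasurable (fun y => (starRingEnd ℂ) (f (T^[m] y)) * f y) μ := by
      have h1 : AEStronglyMeasurable (fun y => f (T^[m] y)) μ :=
        hf.aestronglyMeasurable.comp_quasiMeasurePreserving
          (hT.iterate m).quasiMeasurePreserving
      exact (RCLike.continuous_conj.comp_aestronglyMeasurable h1).mul hf.aestronglyMeasurable
    have step1 : ∫ x, (starRingEnd ℂ) (f (T^[n + m] x)) * f (T^[n] x) ∂μ
        = ∫ x, (fun y => (starRingEnd ℂ) (f (T^[m] y)) * f y) (T^[n] x) ∂μ := by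
      refine integral_congr_ae (Filter.Eventually.of_forall fun x => ?_)
      simp only
      rw [add_comm n m, Function.iterate_add_apply]
    have step2 : ∫ x, (fun y => (starRingEnd ℂ) (f (T^[m] y)) * f y) (T^[n] x) ∂μ
        = ∫ y, (starRingEnd ℂ) (f (T^[m] y)) * f y ∂μ := by
      have hg1' : AEStronglyMeasurable (fun y => (starRingEnd ℂ) (f (T^[m] y)) * f y)
          (μ.map T^[n]) := by rw [hTn.map_eq]; exact hg1
      have h := integral_map (μ := μ) hTn.measurable.aemeasurable hg1'
      rw [hTn.map_eq] at h
      exact h.symm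
    rw [step1, step2]
    refine integral_congr_ae (Filter.Eventually.of_forall fun x => ?_)
    simp
  -- LHS as Lp norm
  have hScoe : ⇑(∑ n ∈ Icc 1 N, c n • F n) =ᵐ[μ]
      fun x => ∑ n ∈ Icc 1 N, c n * f (T^[n] x) := by
    refine (coeFn_sum_ae (Icc 1 N) (fun n => c n • F n)).trans ?_
    have h2 : ∀ᵐ x ∂μ, ∀ n ∈ Icc 1 N, (c n • F n) x = c n * f (T^[n] x) := by
      rw [Filter.eventually_all_finset]
      intro n _
      filter_upwards [Lp.coeFn_smul (c n) (F n), (hfn n).coeFn_toLp] with x hx1 hx2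
      rw [hx1]
      simp [hF, hx2]
    filter_upwards [h2] with x hx
    exact Finset.sum_congr rfl hx
  -- RHS ingredients
  have hre0 : (γ 0).re = ∫ x, ‖f x‖ ^ 2 ∂μ := by
    have h0 : ⇑(F 0) =ᵐ[μ] f := by
      filter_upwards [(hfn 0).coeFn_toLp] with x hx
      exact hx
    rw [hnorm2 (F 0) f h0, hγdef]
    exact inner_self_eq_norm_sq (𝕜 := ℂ) (F 0)
  have hterm : ∀ m : ℕ, ‖γ m‖ = ‖∫ x, f (T^[m] x) * (starRingEnd ℂ) (f x) ∂μ‖ := by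
    intro m
    have h1 : γ m = (starRingEnd ℂ) (∫ x, f (T^[m] x) * (starRingEnd ℂ) (f x) ∂μ) := by
      rw [hγdef]
      simp only
      rw [hinner, ← integral_conj]
      refine integral_congr_ae (Filter.Eventually.of_forall fun x => ?_)
      simp [mul_comm]
    rw [h1, RCLike.norm_conj]
  -- conclude
  have main := vdC_hilbert F γ hγkey c N M hM hMN
  calc ∫ x, ‖∑ n ∈ Icc 1 N, c n * f (T^[n] x)‖ ^ 2 ∂μ
      = ‖∑ n ∈ Icc 1 N, c n • F n‖ ^ 2 := hnorm2 _ _ hScoe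
    _ ≤ 2 * ((N : ℝ) / M) * (∑ n ∈ Icc 1 N, ‖c n‖ ^ 2) * (γ 0).re +
        4 * ((N : ℝ) / M) * ∑ m ∈ Icc 1 M,
          ‖∑ n ∈ Icc 1 (N - m), c (n + m) * (starRingEnd ℂ) (c n)‖ * ‖γ m‖ := main
    _ = _ := by
        rw [hre0]
        have hs : (∑ m ∈ Icc 1 M,
            ‖∑ n ∈ Icc 1 (N - m), c (n + m) * (starRingEnd ℂ) (c n)‖ * ‖γ m‖)
            = ∑ m ∈ Icc 1 M, ‖∑ n ∈ Icc 1 (N - m), c (n + m) * (starRingEnd ℂ) (c n)‖ *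
              ‖∫ x, f (T^[m] x) * (starRingEnd ℂ) (f x) ∂μ‖ :=
          Finset.sum_congr rfl fun m _ => by rw [hterm m]
        rw [hs]
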